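/- Let $p_1,\ldots,p_n$ be distinct primes ($n\geq 3$), $N,N'\in\mathbb{N}$, and let $r_p:\mathbb{Z}[1/p_1,\ldots,1/p_n]^\times\times\mathbb{Z}[1/p_1,\ldots,1/p_n]^\times\to\mathbb{F}_p^\times\times\mathbb{F}_p^\times$ be the reduction map for a prime $p\notin\{p_1,\ldots,p_n\}$. Then $r_p(\Lambda)=r_p(\Lambda')=r_p(\Lambda\cap\Lambda')=r_p(\Lambda\cdot\Lambda')$. -/

import Mathlib

/-- p-adic valuation of an integer (junk value at 0). -/
private def pval (p : ℕ) (z : ℤ) : ℕ := z.natAbs.factorization p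

private lemma pval_mul {p : ℕ} {a b : ℤ} (ha : a ≠ 0) (hb : b ≠ 0) :
    pval p (a * b) = pval p a + pval p b := by
  unfold pval
  rw [Int.natAbs_mul, Nat.factorization_mul (Int.natAbs_ne_zero.mpr ha)
    (Int.natAbs_ne_zero.mpr hb)]
  rfl

private lemma pow_dvd_iff_le_pval {p : ℕ} (hp : p.Prime) {z : ℤ} (hz : z ≠ 0) {n : ℕ} :
    (p : ℤ) ^ n ∣ z ↔ n ≤ pval p z := by
  rw [show ((p : ℤ)) ^ n = ((p ^ n : ℕ) : ℤ) by push_cast; ring, Int.natCast_dvd]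
  exact (Nat.Prime.pow_dvd_iff_le_factorization hp (Int.natAbs_ne_zero.mpr hz))

private lemma val_add {p : ℕ} (hp : p.Prime) {e : ℕ} {a b : ℤ}
    (hab : (p : ℤ) ^ e ∣ a + b) (hb : b ≠ 0) (hbe : pval p b < e) :
    a ≠ 0 ∧ pval p a = pval p b := by
  have ha : a ≠ 0 := by
    rintro rfl
    rw [zero_add] at hab
    exact absurd ((pow_dvd_iff_le_pval hp hb).mp hab) (by omega)
  refine ⟨ha, le_antisymm ?_ ?_⟩
  · by_contra hlt
    push_neg at hlt
    have h1 : (p : ℤ) ^ (pval p b + 1) ∣ a := (pow_dvd_iff_le_pval hp ha).mpr (by omega)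
    have h2 : (p : ℤ) ^ (pval p b + 1) ∣ a + b :=
      dvd_trans (pow_dvd_pow _ (by omega)) hab
    have h3 : (p : ℤ) ^ (pval p b + 1) ∣ b := by
      have := dvd_sub h2 h1
      simpa using this
    exact absurd ((pow_dvd_iff_le_pval hp hb).mp h3) (by omega)
  · have h2 : (p : ℤ) ^ (pval p b) ∣ a + b :=
      dvd_trans (pow_dvd_pow _ (by omega)) hab
    have h1 : (p : ℤ) ^ (pval p b) ∣ b := (pow_dvd_iff_le_pval hp hb).mpr le_rfl
    have : (p : ℤ) ^ (pval p b) ∣ a := by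
      have := dvd_sub h2 h1
      simpa using this
    exact (pow_dvd_iff_le_pval hp ha).mp this

private lemma key_prime {p : ℕ} (hp : p.Prime) (e : ℕ) (s u : ℤ) (k : ℕ) (hk : 1 ≤ k)
    (α : ℕ → ℤ) (h0 : (p : ℤ) ^ e ∣ α 0 * s)
    (hrel : ∀ i, 1 ≤ i → i ≤ k → (p : ℤ) ^ e ∣ α i * s + α (i - 1) * u)
    (hku : (p : ℤ) ^ e ∣ α k * u) : (p : ℤ) ^ e ∣ α 0 * u := by
  by_contra hcon
  have h0u : α 0 * u ≠ 0 := by rintro h; rw [h] at hcon; exact hcon (dvd_zero _)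
  have hα0 : α 0 ≠ 0 := fun h => h0u (by rw [h, zero_mul])
  have hu : u ≠ 0 := fun h => h0u (by rw [h, mul_zero])
  have hs : s ≠ 0 := by
    rintro rfl
    have := hrel 1 le_rfl hk
    rw [mul_zero, zero_add] at this
    -- this : p^e ∣ α 0 * u
    exact hcon this
  have hvcon : pval p (α 0) + pval p u < e := by
    by_contra hle
    push_neg at hle
    exact hcon ((pow_dvd_iff_le_pval hp h0u).mpr (by rw [pval_mul hα0 hu]; omega))
  have hus : pval p u < pval p s := by
    have h0s : α 0 * s ≠ 0 := mul_ne_zero hα0 hs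
    have := (pow_dvd_iff_le_pval hp h0s).mp h0
    rw [pval_mul hα0 hs] at this
    omega
  have main : ∀ i, i ≤ k → α i ≠ 0 ∧ pval p (α i) + pval p u < e := by
    intro i
    induction i with
    | zero => exact fun _ => ⟨hα0, hvcon⟩
    | succ m ih =>
      intro hm1
      obtain ⟨hαm, hvm⟩ := ih (by omega)
      have hb : α m * u ≠ 0 := mul_ne_zero hαm hu
      have hbv : pval p (α m * u) < e := by rw [pval_mul hαm hu]; omega
      have hrel' := hrel (m + 1) (by omega) hm1
      simp only [Nat.add_sub_cancel] at hrel'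
      obtain ⟨hane, heq⟩ := val_add hp hrel' hb hbv
      have hα : α (m + 1) ≠ 0 := fun h => hane (by rw [h, zero_mul])
      rw [pval_mul hα hs, pval_mul hαm hu] at heq
      exact ⟨hα, by omega⟩
  obtain ⟨hαk, hvk⟩ := main k le_rfl
  have := (pow_dvd_iff_le_pval hp (mul_ne_zero hαk hu)).mp hku
  rw [pval_mul hαk hu] at this
  omega

private lemma key_int (m s u : ℤ) (k : ℕ) (hk : 1 ≤ k) (α : ℕ → ℤ)
    (h0 : m ∣ α 0 * s)
    (hrel : ∀ i, 1 ≤ i → i ≤ k → m ∣ α i * s + α (i - 1) * u)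
    (hku : m ∣ α k * u) : m ∣ α 0 * u := by
  rw [← Int.natAbs_dvd_natAbs]
  rw [Nat.dvd_iff_prime_pow_dvd_dvd]
  intro q j hq hqm
  have hqm' : (q : ℤ) ^ j ∣ m := by
    rw [show ((q:ℤ))^j = ((q^j : ℕ) : ℤ) by push_cast; ring, Int.natCast_dvd]
    exact hqm
  have := key_prime hq j s u k hk α (hqm'.trans h0)
    (fun i h1 h2 => hqm'.trans (hrel i h1 h2)) (hqm'.trans hku)
  rw [show ((q:ℤ))^j = ((q^j : ℕ) : ℤ) by push_cast; ring, Int.natCast_dvd] at this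
  exact this

private lemma mem_of_forall_char {G : Type*} [CommGroup G] (H : Subgroup G) (x : G)
    (h : ∀ ψ : Additive G →+ AddCircle (1 : ℚ),
      (∀ g ∈ H, ψ (Additive.ofMul g) = 0) → ψ (Additive.ofMul x) = 0) : x ∈ H := by
  rw [← QuotientGroup.eq_one_iff]
  have key : Additive.ofMul ((x : G ⧸ H)) = 0 := by
    apply CharacterModule.eq_zero_of_character_apply
    intro c
    have := h ((c : Additive (G ⧸ H) →+ AddCircle (1 : ℚ)).comp
      (MonoidHom.toAdditive (QuotientGroup.mk' H)))
      (fun g hg => by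
        change c (Additive.ofMul ((g : G ⧸ H))) = 0
        have h1 : ((g : G ⧸ H)) = 1 := (QuotientGroup.eq_one_iff g).mpr hg
        simp [MonoidHom.toAdditive, h1])
    exact this
  simpa using congrArg Additive.toMul key

private lemma chain_mem {C : Type*} [CommGroup C] [IsCyclic C] (k : ℕ) (hk : 1 ≤ k)
    (a : ℕ → C) (H : Subgroup (C × C))
    (h0 : ((a 0, (1 : C)) : C × C) ∈ H)
    (hmid : ∀ i, 1 ≤ i → i ≤ k → ((a i, a (i - 1)) : C × C) ∈ H)
    (hlast : (((1 : C), a k) : C × C) ∈ H) :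
    (((1 : C), a 0) : C × C) ∈ H := by
  obtain ⟨t, ht⟩ := IsCyclic.exists_generator (α := C)
  choose α hα using fun i => Subgroup.mem_zpowers_iff.mp (ht (a i))
  apply mem_of_forall_char
  intro ψ hψ
  set x := ψ (Additive.ofMul ((t, 1) : C × C)) with hx
  set y := ψ (Additive.ofMul (((1 : C), t) : C × C)) with hy
  have key : ∀ γ δ : ℤ, ψ (Additive.ofMul ((t ^ γ, t ^ δ) : C × C)) = γ • x + δ • y := by
    intro γ δ
    have hsplit : ((t ^ γ, t ^ δ) : C × C)
        = ((t, 1) : C × C) ^ γ * (((1 : C), t) : C × C) ^ δ := by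
      ext <;> simp
    rw [hsplit, ofMul_mul, map_add, ofMul_zpow, ofMul_zpow, map_zsmul, map_zsmul]
  have c0 : (α 0) • x = 0 := by
    have h := hψ _ h0
    rw [show ((a 0, (1 : C)) : C × C) = (t ^ α 0, t ^ (0 : ℤ)) by
      ext <;> simp [hα 0], key] at h
    simpa using h
  have cmid : ∀ i, 1 ≤ i → i ≤ k → (α i) • x + (α (i - 1)) • y = 0 := by
    intro i h1 h2
    have h := hψ _ (hmid i h1 h2)
    rwa [show ((a i, a (i - 1)) : C × C) = (t ^ α i, t ^ α (i - 1)) by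
      ext <;> simp [hα], key] at h
  have ck : (α k) • y = 0 := by
    have h := hψ _ hlast
    rw [show (((1 : C), a k) : C × C) = (t ^ (0 : ℤ), t ^ α k) by
      ext <;> simp [hα k], key] at h
    simpa using h
  rw [show (((1 : C), a 0) : C × C) = (t ^ (0 : ℤ), t ^ α 0) by ext <;> simp [hα 0], key,
    zero_smul, zero_add]
  -- now the AddCircle computation
  obtain ⟨xq, hxq⟩ := QuotientAddGroup.mk_surjective x
  obtain ⟨yq, hyq⟩ := QuotientAddGroup.mk_surjective y
  set m : ℤ := (xq.den : ℤ) * (yq.den : ℤ) with hm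
  set s : ℤ := xq.num * (yq.den : ℤ) with hs
  set u : ℤ := yq.num * (xq.den : ℤ) with hu
  have hm0 : (m : ℚ) ≠ 0 := by
    push_cast
    positivity
  have hsm : (s : ℚ) = xq * m := by
    push_cast [hs, hm]
    rw [show ((xq.num : ℚ)) = xq * xq.den by rw [mul_comm, Rat.den_mul_eq_num]]
    ring
  have hum : (u : ℚ) = yq * m := by
    push_cast [hu, hm]
    rw [show ((yq.num : ℚ)) = yq * yq.den by rw [mul_comm, Rat.den_mul_eq_num]]
    ring
  have tocoe : ∀ (γ : ℤ) (w : ℚ), γ • ((w : AddCircle (1 : ℚ))) = 0 ↔ ∃ z : ℤ, (z : ℚ) = γ * w := by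
    intro γ w
    rw [← AddCircle.coe_zsmul, AddCircle.coe_eq_zero_iff]
    constructor
    · rintro ⟨z, hz⟩; exact ⟨z, by rw [zsmul_eq_mul, mul_one] at hz; rw [hz]; simp [zsmul_eq_mul]⟩
    · rintro ⟨z, hz⟩; exact ⟨z, by rw [zsmul_eq_mul, mul_one, hz]; simp [zsmul_eq_mul]⟩
  have d0 : m ∣ α 0 * s := by
    rw [← hxq] at c0
    obtain ⟨z, hz⟩ := (tocoe _ _).mp c0
    refine ⟨z, ?_⟩
    have : ((α 0 * s : ℤ) : ℚ) = ((m * z : ℤ) : ℚ) := by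
      push_cast
      rw [hsm]
      push_cast at hz
      linear_combination (m : ℚ) * hz.symm
    exact_mod_cast this
  have dk : m ∣ α k * u := by
    rw [← hyq] at ck
    obtain ⟨z, hz⟩ := (tocoe _ _).mp ck
    refine ⟨z, ?_⟩
    have : ((α k * u : ℤ) : ℚ) = ((m * z : ℤ) : ℚ) := by
      push_cast
      rw [hum]
      push_cast at hz
      linear_combination (m : ℚ) * hz.symm
    exact_mod_cast this
  have dmid : ∀ i, 1 ≤ i → i ≤ k → m ∣ α i * s + α (i - 1) * u := by
    intro i h1 h2
    have h := cmid i h1 h2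
    rw [← hxq, ← hyq, ← AddCircle.coe_zsmul, ← AddCircle.coe_zsmul, ← AddCircle.coe_add,
      AddCircle.coe_eq_zero_iff] at h
    obtain ⟨z, hz⟩ := h
    refine ⟨z, ?_⟩
    rw [zsmul_eq_mul, mul_one, zsmul_eq_mul, zsmul_eq_mul] at hz
    have : ((α i * s + α (i - 1) * u : ℤ) : ℚ) = ((m * z : ℤ) : ℚ) := by
      push_cast
      rw [hsm, hum]
      push_cast at hz
      linear_combination (-(m : ℚ)) * hz
    exact_mod_cast this
  have dgoal : m ∣ α 0 * u := key_int m s u k hk α d0 dmid dk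
  rw [← hyq]
  rw [tocoe]
  obtain ⟨z, hz⟩ := dgoal
  refine ⟨z, ?_⟩
  have h1 : ((α 0 * u : ℤ) : ℚ) = ((m * z : ℤ) : ℚ) := by exact_mod_cast hz
  push_cast at h1
  rw [hum] at h1
  have h2 : (z : ℚ) * m = ((α 0 : ℚ) * yq) * m := by linear_combination h1.symm
  exact mul_right_cancel₀ hm0 h2

private lemma chain_mem' {C : Type*} [CommGroup C] [IsCyclic C] (k : ℕ) (hk : 1 ≤ k)
    (a : ℕ → C) (H : Subgroup (C × C))
    (h0 : ((a 0, (1 : C)) : C × C) ∈ H)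
    (hmid : ∀ i, 1 ≤ i → i ≤ k → ((a i, a (i - 1)) : C × C) ∈ H)
    (hlast : (((1 : C), a k) : C × C) ∈ H) :
    ((a k, (1 : C)) : C × C) ∈ H := by
  set H' : Subgroup (C × C) := H.comap (MulEquiv.prodComm : C × C ≃* C × C).toMonoidHom with hH'
  have hmem : ∀ x y : C, ((x, y) : C × C) ∈ H' ↔ ((y, x) : C × C) ∈ H := by
    intro x y
    rw [hH', Subgroup.mem_comap]
    rfl
  have := chain_mem k hk (fun i => a (k - i)) H'
    (by simpa [hmem] using hlast)
    (fun i h1 h2 => by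
      rw [hmem]
      have e1 : k - (i - 1) = (k - i + 1) := by omega
      have e2 : k - i = (k - i + 1) - 1 := by omega
      rw [e1, e2]
      exact hmid (k - i + 1) (by omega) (by omega))
    (by simpa [hmem] using h0)
  simp only [Nat.sub_zero] at this
  exact (hmem _ _).mp this


/-- The generators `λ₁ = (u 0, 1)`, `λ_{j+1} = (u j, u (j-1))` for `1 ≤ j ≤ n`,
`λ_{n+2} = (1, u (n))` (indices 0-based, family `u` of size `n+1`). -/
def wildGens {G : Type*} [Group G] {n : ℕ} (u : Fin (n + 1) → G) :
    Fin (n + 2) → G × G := fun j =>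
  (if h : (j : ℕ) < n + 1 then u ⟨j, h⟩ else 1,
   if h : 0 < (j : ℕ) then u ⟨(j : ℕ) - 1, by have := j.isLt; omega⟩ else 1)

/-- Let `q 0, …, q (n+2)` be distinct primes (family of size `n+3 ≥ 3`),
`N, N' : ℕ`, and `p` a prime different from all of them. Since the reduction map `r_p`
is a homomorphism, `r_p(Λ)`, `r_p(Λ')`, `r_p(Λ ∩ Λ')` and `r_p(Λ·Λ')` are the subgroups
of `(ZMod p)ˣ × (ZMod p)ˣ` generated by the reductions of the corresponding generators
(`v i` being the reduction of the prime `q i`); the statement is that these four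
subgroups coincide. -/
theorem reductions_of_wild_subgroups_eq (n : ℕ) (q : Fin (n + 3) → ℕ)
    (hq : ∀ i, (q i).Prime) (hinj : Function.Injective q) (N N' : ℕ)
    (p : ℕ) [Fact p.Prime] (hp : ∀ i, q i ≠ p)
    (v : Fin (n + 3) → (ZMod p)ˣ) (hv : ∀ i, (v i : ZMod p) = (q i : ZMod p)) :
    Subgroup.closure (insert ((1 : (ZMod p)ˣ), (v 0) ^ N) (Set.range (wildGens v)))
        = Subgroup.closure (Set.range (wildGens v)) ∧
    Subgroup.closure (insert ((v (Fin.last (n + 2))) ^ N', (1 : (ZMod p)ˣ))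
          (Set.range (wildGens v)))
        = Subgroup.closure (Set.range (wildGens v)) ∧
    Subgroup.closure (insert ((1 : (ZMod p)ˣ), (v 0) ^ N)
          (insert ((v (Fin.last (n + 2))) ^ N', (1 : (ZMod p)ˣ))
            (Set.range (wildGens v))))
        = Subgroup.closure (Set.range (wildGens v)) := by
  set a : ℕ → (ZMod p)ˣ := fun i => if h : i < n + 3 then v ⟨i, h⟩ else 1 with ha
  have hgen : ∀ (j : Fin (n + 4)) , wildGens v j ∈ Subgroup.closure (Set.range (wildGens v)) :=
    fun j => Subgroup.subset_closure (Set.mem_range_self _)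
  have h0 : ((a 0, (1 : (ZMod p)ˣ)) : (ZMod p)ˣ × (ZMod p)ˣ)
      ∈ Subgroup.closure (Set.range (wildGens v)) := by
    have e : wildGens v ⟨0, by omega⟩ = ((a 0, (1 : (ZMod p)ˣ)) : _ × _) := by
      simp only [wildGens, ha]
      split_ifs <;> first | rfl | (exfalso; omega)
    rw [← e]; exact hgen _
  have hmid : ∀ i, 1 ≤ i → i ≤ n + 2 → ((a i, a (i - 1)) : (ZMod p)ˣ × (ZMod p)ˣ)
      ∈ Subgroup.closure (Set.range (wildGens v)) := by
    intro i h1 h2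
    have e : wildGens v ⟨i, by omega⟩ = ((a i, a (i - 1)) : _ × _) := by
      simp only [wildGens, ha]
      split_ifs <;> first | rfl | (exfalso; omega)
    rw [← e]; exact hgen _
  have hlast : (((1 : (ZMod p)ˣ), a (n + 2)) : (ZMod p)ˣ × (ZMod p)ˣ)
      ∈ Subgroup.closure (Set.range (wildGens v)) := by
    have e : wildGens v ⟨n + 3, by omega⟩ = (((1 : (ZMod p)ˣ), a (n + 2)) : _ × _) := by
      simp only [wildGens, ha]
      split_ifs <;> first | rfl | (exfalso; omega)
    rw [← e]; exact hgen _
  have m1 := chain_mem (n + 2) (by omega) a _ h0 hmid hlast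
  have m2 := chain_mem' (n + 2) (by omega) a _ h0 hmid hlast
  have ea0 : a 0 = v 0 := by
    have h03 : (⟨0, by omega⟩ : Fin (n + 3)) = 0 := by
      ext
      simp
    simp only [ha, dif_pos (by omega : (0:ℕ) < n + 3), h03]
  have eak : a (n + 2) = v (Fin.last (n + 2)) := by
    simp only [ha, dif_pos (by omega : n + 2 < n + 3)]
    rfl
  rw [ea0] at m1
  rw [eak] at m2
  have mN : (((1 : (ZMod p)ˣ), (v 0) ^ N) : (ZMod p)ˣ × (ZMod p)ˣ)
      ∈ Subgroup.closure (Set.range (wildGens v)) := by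
    have := pow_mem m1 N
    simpa using this
  have mN' : (((v (Fin.last (n + 2))) ^ N', (1 : (ZMod p)ˣ)) : (ZMod p)ˣ × (ZMod p)ˣ)
      ∈ Subgroup.closure (Set.range (wildGens v)) := by
    have := pow_mem m2 N'
    simpa using this
  have hins : ∀ (x : (ZMod p)ˣ × (ZMod p)ˣ) (S : Set ((ZMod p)ˣ × (ZMod p)ˣ)),
      x ∈ Subgroup.closure S →
      Subgroup.closure (insert x S) = Subgroup.closure S := fun x S hx =>
    le_antisymm ((Subgroup.closure_le _).mpr
        (Set.insert_subset_iff.mpr ⟨hx, Subgroup.subset_closure⟩))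
      (Subgroup.closure_mono (Set.subset_insert _ _))
  refine ⟨hins _ _ mN, hins _ _ mN', ?_⟩
  rw [hins _ _ (show (((1 : (ZMod p)ˣ), (v 0) ^ N) : (ZMod p)ˣ × (ZMod p)ˣ)
      ∈ Subgroup.closure (insert ((v (Fin.last (n + 2))) ^ N', (1 : (ZMod p)ˣ))
        (Set.range (wildGens v))) by rw [hins _ _ mN']; exact mN), hins _ _ mN']
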